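/- Let T : H → H be a bounded, adjointable, 𝒜-linear operator that is invertible with bounded adjointable inverse. If (X, Y) is a continuous biframe for H with bounds A and B, then (T∘X, T∘Y) is a continuous biframe for H with bounds A·‖(T⁻¹)*‖⁻² and B·‖T*‖²; that is, for all f ∈ H, A·‖(T⁻¹)*‖⁻²·⟨f,f⟩ ≤ ∫_Ω ⟨f, T X(ω)⟩⟨T Y(ω), f⟩ dμ(ω) ≤ B·‖T*‖²·⟨f,f⟩. -/

import Mathlib

open MeasureTheory

set_option linter.unusedSectionVars false

section Aux

variable {𝒜 : Type*} [NormedRing 𝒜] [StarRing 𝒜] [CStarRing 𝒜] [NormedAlgebra ℂ 𝒜] [CompleteSpace 𝒜]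
  [PartialOrder 𝒜] [StarOrderedRing 𝒜]

lemma aux_star_rone (r : ℝ) : star (r • (1:𝒜)) = r • (1:𝒜) := by
  let φ : ℝ →+ 𝒜 :=
    { toFun := fun r => star (r • (1:𝒜))
      map_zero' := by simp
      map_add' := fun x y => by simp [add_smul] }
  have hφ : Continuous φ := continuous_star.comp (continuous_id.smul continuous_const)
  have := (φ.toRealLinearMap hφ).map_smul r 1
  simpa [φ] using this

lemma aux_rsmul_mul (r : ℝ) (a : 𝒜) : (r • (1:𝒜)) * a = r • a := by
  rw [smul_mul_assoc, one_mul]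

lemma aux_mul_rsmul (r : ℝ) (a : 𝒜) : a * (r • (1:𝒜)) = r • a := by
  rw [mul_smul_comm, mul_one]

lemma aux_star_rsmul (r : ℝ) (a : 𝒜) : star (r • a) = r • star a := by
  rw [← aux_rsmul_mul, star_mul, aux_star_rone, aux_mul_rsmul]

lemma aux_smul_le_smul {r : ℝ} (hr : 0 ≤ r) {a b : 𝒜} (h : a ≤ b) : r • a ≤ r • b := by
  have h2 := star_left_conjugate_le_conjugate h (Real.sqrt r • (1:𝒜))
  rw [aux_star_rsmul, star_one] at h2
  rw [aux_rsmul_mul, aux_rsmul_mul, aux_mul_rsmul, aux_mul_rsmul, smul_smul, smul_smul,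
    Real.mul_self_sqrt hr] at h2
  exact h2

lemma aux_smul_nonneg {r : ℝ} (hr : 0 ≤ r) {a : 𝒜} (h : 0 ≤ a) : 0 ≤ r • a := by
  simpa using aux_smul_le_smul hr h

lemma aux_smul_le_smul_right {r s : ℝ} (hrs : r ≤ s) {a : 𝒜} (ha : 0 ≤ a) : r • a ≤ s • a := by
  have := aux_smul_nonneg (sub_nonneg.2 hrs) ha
  rw [sub_smul] at this
  exact sub_nonneg.1 this

-- the central unit i•1
lemma aux_I_central (a : 𝒜) : (Complex.I • (1:𝒜)) * a = a * (Complex.I • (1:𝒜)) := by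
  rw [smul_mul_assoc, one_mul, mul_smul_comm, mul_one]

lemma aux_I_sq : (Complex.I • (1:𝒜)) * (Complex.I • (1:𝒜)) = -1 := by
  rw [smul_mul_assoc, one_mul, smul_smul, Complex.I_mul_I]
  simp

lemma aux_star_I : star (Complex.I • (1:𝒜)) = -(Complex.I • (1:𝒜)) := by
  set u : 𝒜 := Complex.I • (1:𝒜) with hu
  set w : 𝒜 := star u with hw
  have hcen : ∀ a : 𝒜, u * a = a * u := aux_I_central
  have huu : u * u = -1 := aux_I_sq
  have hw2 : w * w = -1 := by
    have := congrArg star huu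
    rw [star_mul] at this
    simpa using this
  set v : 𝒜 := u * w with hv
  have hv' : v = star w * w := by rw [hv, hw, star_star]
  have hvnn : 0 ≤ v := hv' ▸ star_mul_self_nonneg w
  have hvsa : star v = v := by rw [hv', star_mul, star_star]
  have hwu : w * u = u * w := (hcen w).symm
  have hv2 : v * v = 1 := by
    have e : u * w * (u * w) = u * (w * u) * w := by noncomm_ring
    rw [hv, e, hwu]
    have e2 : u * (u * w) * w = u * u * (w * w) := by noncomm_ring
    rw [e2, huu, hw2]
    noncomm_ring
  set X : 𝒜 := 1 - v with hX
  have hXsa : star X = X := by rw [hX, star_sub, star_one, hvsa]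
  have hsq : (v - 1) * (v - 1) = X + X := by
    have e : (v - 1) * (v - 1) = v * v - (v + v) + 1 := by noncomm_ring
    rw [e, hv2, hX]
    abel
  have hXX : 0 ≤ X + X := by
    rw [← hsq]
    have hsa : star (v - 1) = v - 1 := by rw [star_sub, star_one, hvsa]
    calc (0:𝒜) ≤ star (v - 1) * (v - 1) := star_mul_self_nonneg _
    _ = (v - 1) * (v - 1) := by rw [hsa]
  have hXnn : 0 ≤ X := by
    have h := aux_smul_nonneg (by norm_num : (0:ℝ) ≤ 2⁻¹) hXX
    rwa [← two_smul ℝ X, smul_smul, inv_mul_cancel₀ (by norm_num : (2:ℝ) ≠ 0), one_smul] at h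
  have hXvX : X * v * X = (-2 : ℝ) • X := by
    have e1 : X * v * X = v - (v * v + v * v) + (v * v) * v := by
      rw [hX]; noncomm_ring
    rw [e1, hv2, one_mul, hX]
    have e2 : ((-2 : ℝ)) • (1 - v) = -((2:ℝ) • (1 - v)) := by rw [neg_smul]
    rw [e2, two_smul]
    abel
  have hconj : 0 ≤ X * v * X := by
    have h := star_left_conjugate_nonneg hvnn X
    rwa [hXsa] at h
  have hXneg : X ≤ 0 := by
    rw [hXvX] at hconj
    have h := aux_smul_nonneg (by norm_num : (0:ℝ) ≤ 2⁻¹) hconj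
    rw [smul_smul] at h
    have he : (2⁻¹ * -2 : ℝ) = -1 := by norm_num
    rw [he, neg_smul, one_smul] at h
    exact neg_nonneg.mp h
  have hX0 : X = 0 := le_antisymm hXneg hXnn
  have hv1 : v = 1 := by
    have h1 : (1:𝒜) - v = 0 := hX0
    exact (sub_eq_zero.mp h1).symm
  have huw1 : u * w = 1 := hv ▸ hv1
  have huw : u * (w + u) = 0 := by
    rw [mul_add, huw1, huu]
    norm_num
  have hwu0 : w + u = 0 := by
    have h2 := congrArg (fun z => u * z) huw
    simp only [mul_zero] at h2
    rw [← mul_assoc, huu, neg_one_mul, neg_eq_zero] at h2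
    exact h2
  exact eq_neg_of_add_eq_zero_left hwu0

lemma aux_starModule : StarModule ℂ 𝒜 := by
  constructor
  intro c a
  have hone : ∀ z : ℂ, star (z • (1:𝒜)) = (starRingEnd ℂ z) • (1:𝒜) := by
    intro z
    have hdec : z • (1:𝒜) = (z.re : ℝ) • (1:𝒜) + (z.im : ℝ) • (Complex.I • (1:𝒜)) := by
      rw [← Complex.coe_smul, ← Complex.coe_smul, smul_smul, ← add_smul]
      rw [Complex.re_add_im]
    rw [hdec, star_add, aux_star_rone, aux_star_rsmul, aux_star_I]
    have hdec2 : (starRingEnd ℂ z) • (1:𝒜)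
        = (z.re : ℝ) • (1:𝒜) + (-z.im : ℝ) • (Complex.I • (1:𝒜)) := by
      rw [← Complex.coe_smul, ← Complex.coe_smul, smul_smul, ← add_smul]
      congr 1
      simp [Complex.ext_iff]
    rw [hdec2]
    congr 1
    rw [smul_neg, ← neg_smul]
  calc star (c • a) = star ((c • (1:𝒜)) * a) := by rw [smul_mul_assoc, one_mul]
  _ = star a * star (c • (1:𝒜)) := star_mul _ _
  _ = star a * ((starRingEnd ℂ c) • (1:𝒜)) := by rw [hone]
  _ = (starRingEnd ℂ c) • star a := by rw [mul_smul_comm, mul_one]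

lemma aux_le_norm_one {a : 𝒜} (h : 0 ≤ a) : a ≤ ‖a‖ • (1:𝒜) := by
  letI := aux_starModule (𝒜 := 𝒜)
  letI : CStarAlgebra 𝒜 := {}
  have h2 := IsSelfAdjoint.le_algebraMap_norm_self (A := 𝒜) (a := a) (.of_nonneg h)
  rwa [Algebra.algebraMap_eq_smul_one] at h2

lemma aux_norm_le_norm {a b : 𝒜} (ha : 0 ≤ a) (h : a ≤ b) : ‖a‖ ≤ ‖b‖ := by
  letI := aux_starModule (𝒜 := 𝒜)
  letI : CStarAlgebra 𝒜 := {}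
  exact CStarAlgebra.norm_le_norm_of_nonneg_of_le ha h

lemma aux_le_of_forall_le_add (a b : 𝒜) (C : ℝ)
    (h : ∀ n : ℕ, a ≤ b + (((2:ℝ)⁻¹) ^ n * C) • (1:𝒜)) : a ≤ b := by
  letI := aux_starModule (𝒜 := 𝒜)
  letI : CStarAlgebra 𝒜 := {}
  have h1 : Filter.Tendsto (fun n : ℕ => ((2:ℝ)⁻¹) ^ n * C) Filter.atTop (nhds 0) := by
    simpa using (tendsto_pow_atTop_nhds_zero_of_lt_one (r := (2:ℝ)⁻¹) (by norm_num) (by norm_num)).mul_const C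
  have h2 := h1.smul_const (1:𝒜)
  rw [zero_smul] at h2
  have ht : Filter.Tendsto (fun n : ℕ => b + (((2:ℝ)⁻¹) ^ n * C) • (1:𝒜))
      Filter.atTop (nhds b) := by
    simpa using tendsto_const_nhds.add h2
  exact ge_of_tendsto' ht h

section HilbertModule

variable {H : Type*} [NormedAddCommGroup H] [NormedSpace ℝ H] [Module 𝒜 H]
variable {inn : H → H → 𝒜}

lemma aux_inn_zero_left (inn_add_left : ∀ x y z : H, inn (x + y) z = inn x z + inn y z)
    (z : H) : inn 0 z = 0 := by
  have h := inn_add_left 0 0 z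
  rw [add_zero] at h
  exact (left_eq_add.mp h)

lemma aux_inn_zero_right (inn_add_left : ∀ x y z : H, inn (x + y) z = inn x z + inn y z)
    (inn_conj_symm : ∀ x y : H, inn x y = star (inn y x)) (x : H) : inn x 0 = 0 := by
  rw [inn_conj_symm, aux_inn_zero_left inn_add_left, star_zero]

lemma aux_inn_neg_left (inn_smul_left : ∀ (a : 𝒜) (x z : H), inn (a • x) z = a * inn x z)
    (y z : H) : inn (-y) z = -inn y z := by
  rw [← neg_one_smul 𝒜 y, inn_smul_left, neg_one_mul]

lemma aux_inn_sub_left (inn_add_left : ∀ x y z : H, inn (x + y) z = inn x z + inn y z)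
    (inn_smul_left : ∀ (a : 𝒜) (x z : H), inn (a • x) z = a * inn x z)
    (x y z : H) : inn (x - y) z = inn x z - inn y z := by
  rw [sub_eq_add_neg, inn_add_left, aux_inn_neg_left inn_smul_left, ← sub_eq_add_neg]

lemma aux_inn_sub_right (inn_add_left : ∀ x y z : H, inn (x + y) z = inn x z + inn y z)
    (inn_smul_left : ∀ (a : 𝒜) (x z : H), inn (a • x) z = a * inn x z)
    (inn_conj_symm : ∀ x y : H, inn x y = star (inn y x))
    (x y z : H) : inn x (y - z) = inn x y - inn x z := by
  rw [inn_conj_symm, aux_inn_sub_left inn_add_left inn_smul_left, star_sub,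
    ← inn_conj_symm, ← inn_conj_symm]

lemma aux_inn_smul_right (inn_smul_left : ∀ (a : 𝒜) (x z : H), inn (a • x) z = a * inn x z)
    (inn_conj_symm : ∀ x y : H, inn x y = star (inn y x))
    (a : 𝒜) (x y : H) : inn x (a • y) = inn x y * star a := by
  rw [inn_conj_symm, inn_smul_left, star_mul, ← inn_conj_symm]

lemma aux_inn_self_sa (inn_conj_symm : ∀ x y : H, inn x y = star (inn y x))
    (x : H) : star (inn x x) = inn x x := (inn_conj_symm x x).symm

lemma aux_norm_inn_self (hnorm : ∀ x : H, ‖x‖ = Real.sqrt ‖inn x x‖)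
    (x : H) : ‖inn x x‖ = ‖x‖ ^ 2 := by
  rw [hnorm x, Real.sq_sqrt (norm_nonneg _)]

lemma aux_cross (inn_add_left : ∀ x y z : H, inn (x + y) z = inn x z + inn y z)
    (inn_smul_left : ∀ (a : 𝒜) (x z : H), inn (a • x) z = a * inn x z)
    (inn_conj_symm : ∀ x y : H, inn x y = star (inn y x))
    (inn_nonneg : ∀ x : H, 0 ≤ inn x x)
    (x y : H) {t : ℝ} (ht : 0 < t) :
    inn x y + inn y x ≤ t • inn x x + t⁻¹ • inn y y := by
  set s : ℝ := Real.sqrt t with hs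
  have hs0 : s ≠ 0 := ne_of_gt (Real.sqrt_pos.mpr ht)
  have key : ∀ (r r' : ℝ) (u v : H),
      inn ((r • (1:𝒜)) • u) ((r' • (1:𝒜)) • v) = (r * r') • inn u v := by
    intro r r' u v
    rw [inn_smul_left, aux_inn_smul_right inn_smul_left inn_conj_symm,
      aux_star_rone, aux_rsmul_mul, aux_mul_rsmul, smul_smul, mul_comm]
  have h0 := inn_nonneg ((s • (1:𝒜)) • x - (s⁻¹ • (1:𝒜)) • y)
  rw [aux_inn_sub_left inn_add_left inn_smul_left,
    aux_inn_sub_right inn_add_left inn_smul_left inn_conj_symm,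
    aux_inn_sub_right inn_add_left inn_smul_left inn_conj_symm] at h0
  rw [key, key, key, key] at h0
  rw [Real.mul_self_sqrt ht.le, mul_inv_cancel₀ hs0, inv_mul_cancel₀ hs0,
    ← mul_inv, Real.mul_self_sqrt ht.le, one_smul, one_smul] at h0
  have h1 : t • inn x x - inn x y - (inn y x - t⁻¹ • inn y y)
      = (t • inn x x + t⁻¹ • inn y y) - (inn x y + inn y x) := by abel
  rw [h1] at h0
  exact sub_nonneg.mp h0

lemma aux_cs (inn_add_left : ∀ x y z : H, inn (x + y) z = inn x z + inn y z)
    (inn_smul_left : ∀ (a : 𝒜) (x z : H), inn (a • x) z = a * inn x z)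
    (inn_conj_symm : ∀ x y : H, inn x y = star (inn y x))
    (inn_nonneg : ∀ x : H, 0 ≤ inn x x)
    (hnorm : ∀ x : H, ‖x‖ = Real.sqrt ‖inn x x‖)
    (x y : H) : ‖inn x y‖ ≤ ‖x‖ * ‖y‖ := by
  by_cases hy : y = 0
  · rw [hy, aux_inn_zero_right inn_add_left inn_conj_symm]
    simp [mul_nonneg (norm_nonneg x) (norm_nonneg y)]
  · set N : ℝ := ‖inn y y‖ with hN
    have hNy : N = ‖y‖ ^ 2 := aux_norm_inn_self hnorm y
    have hNpos : 0 < N := by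
      rw [hNy]; exact pow_pos (norm_pos_iff.mpr hy) 2
    set a₀ : 𝒜 := inn x y with ha₀
    set K : 𝒜 := a₀ * star a₀ with hK
    have hKnn : 0 ≤ K := mul_star_self_nonneg a₀
    set b : 𝒜 := N⁻¹ • a₀ with hb
    have h0 := inn_nonneg (x - b • y)
    rw [aux_inn_sub_left inn_add_left inn_smul_left,
      aux_inn_sub_right inn_add_left inn_smul_left inn_conj_symm,
      aux_inn_sub_right inn_add_left inn_smul_left inn_conj_symm] at h0
    simp only [inn_smul_left, aux_inn_smul_right inn_smul_left inn_conj_symm] at h0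
    -- h0 : 0 ≤ inn x x - inn x y * star b - (b * inn y x - b * (inn y y * star b))
    have e1 : inn x y * star b = N⁻¹ • K := by
      rw [hb, aux_star_rsmul, mul_smul_comm, hK]
    have e2 : b * inn y x = N⁻¹ • K := by
      rw [hb, smul_mul_assoc, hK, ← inn_conj_symm]
    have e3 : b * (inn y y * star b) = (N⁻¹ * N⁻¹) • (a₀ * (inn y y * star a₀)) := by
      rw [hb, aux_star_rsmul, mul_smul_comm, mul_smul_comm, smul_mul_assoc, smul_smul]
    have hmid : a₀ * (inn y y * star a₀) ≤ N • K := by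
      have hc := star_left_conjugate_le_conjugate (aux_le_norm_one (inn_nonneg y)) (star a₀)
      rw [star_star] at hc
      calc a₀ * (inn y y * star a₀) = a₀ * inn y y * star a₀ := by rw [mul_assoc]
      _ ≤ a₀ * (‖inn y y‖ • (1:𝒜)) * star a₀ := hc
      _ = N • K := by rw [aux_mul_rsmul, smul_mul_assoc, hK]
    have e4 : b * (inn y y * star b) ≤ N⁻¹ • K := by
      rw [e3]
      calc (N⁻¹ * N⁻¹) • (a₀ * (inn y y * star a₀)) ≤ (N⁻¹ * N⁻¹) • (N • K) :=
        aux_smul_le_smul (by positivity) hmid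
      _ = N⁻¹ • K := by rw [smul_smul]; congr 1; field_simp
    rw [e1, e2] at h0
    have h5 : N⁻¹ • K ≤ inn x x := by
      have h6 : inn x x - N⁻¹ • K - (N⁻¹ • K - b * (inn y y * star b)) ≤ inn x x - N⁻¹ • K :=
        by
          have := sub_nonneg.mpr e4
          calc inn x x - N⁻¹ • K - (N⁻¹ • K - b * (inn y y * star b))
              ≤ inn x x - N⁻¹ • K - 0 := sub_le_sub_left (sub_nonneg.mpr e4) _
          _ = inn x x - N⁻¹ • K := sub_zero _
      have h7 : (0:𝒜) ≤ inn x x - N⁻¹ • K := le_trans h0 h6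
      exact sub_nonneg.mp h7
    have h8 : ‖N⁻¹ • K‖ ≤ ‖inn x x‖ :=
      aux_norm_le_norm (aux_smul_nonneg (by positivity) hKnn) h5
    rw [norm_smul, Real.norm_eq_abs, abs_of_pos (inv_pos.mpr hNpos),
      hK, CStarRing.norm_self_mul_star, aux_norm_inn_self hnorm x] at h8
    have h9 : ‖a₀‖ * ‖a₀‖ ≤ ‖x‖ ^ 2 * ‖y‖ ^ 2 := by
      calc ‖a₀‖ * ‖a₀‖ = N * (N⁻¹ * (‖a₀‖ * ‖a₀‖)) := by field_simp
      _ ≤ N * ‖x‖ ^ 2 := mul_le_mul_of_nonneg_left h8 hNpos.le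
      _ = ‖x‖ ^ 2 * ‖y‖ ^ 2 := by rw [hNy]; ring
    nlinarith [norm_nonneg a₀, norm_nonneg x, norm_nonneg y,
      mul_nonneg (norm_nonneg x) (norm_nonneg y)]

end HilbertModule

section Key

variable {H : Type*} [NormedAddCommGroup H] [NormedSpace ℝ H] [Module 𝒜 H]
variable {inn : H → H → 𝒜}

lemma aux_key (inn_add_left : ∀ x y z : H, inn (x + y) z = inn x z + inn y z)
    (inn_smul_left : ∀ (a : 𝒜) (x z : H), inn (a • x) z = a * inn x z)
    (inn_conj_symm : ∀ x y : H, inn x y = star (inn y x))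
    (inn_nonneg : ∀ x : H, 0 ≤ inn x x)
    (hnorm : ∀ x : H, ‖x‖ = Real.sqrt ‖inn x x‖)
    (M : H →L[ℝ] H) (hM : ∀ x y : H, inn (M x) y = inn x (M y)) (f : H) :
    inn f (M f) ≤ ‖M‖ • inn f f := by
  set c : ℝ := ‖M‖ with hc
  rcases eq_or_lt_of_le (norm_nonneg M) with hc0 | hcpos
  · -- M = 0
    have hM0 : M = 0 := by rwa [eq_comm, norm_eq_zero] at hc0
    rw [hM0]
    simp only [ContinuousLinearMap.zero_apply, norm_zero, zero_smul]
    rw [aux_inn_zero_right inn_add_left inn_conj_symm]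
    rw [show c = 0 from hc0.symm, zero_smul]
  · -- c > 0
    set b : ℕ → 𝒜 := fun k => inn f ((M ^ k) f) with hb
    have hpow : ∀ (k : ℕ) (x y : H), inn ((M ^ k) x) y = inn x ((M ^ k) y) := by
      intro k
      induction k with
      | zero => intro x y; simp [ContinuousLinearMap.one_apply]
      | succ k ih =>
        intro x y
        have h1 : (M ^ (k+1)) x = (M ^ k) (M x) := by
          rw [pow_succ]; rfl
        have h2 : (M ^ (k+1)) y = M ((M ^ k) y) := by
          rw [pow_succ']; rfl
        rw [h1, h2, ih (M x) y, ← hM x ((M ^ k) y)]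
    have hb_even : ∀ m : ℕ, b (2 * m) = inn ((M ^ m) f) ((M ^ m) f) := by
      intro m
      have h1 : (M ^ (2 * m)) f = (M ^ m) ((M ^ m) f) := by
        rw [two_mul, pow_add]; rfl
      rw [hb]
      simp only [h1]
      exact (hpow m f ((M ^ m) f)).symm
    have hb0 : b 0 = inn f f := by simp [hb, ContinuousLinearMap.one_apply]
    have hbnn : ∀ m : ℕ, 0 ≤ b (2 * m) := fun m => (hb_even m) ▸ inn_nonneg _
    have hbnorm : ∀ k : ℕ, 0 < k → ‖b k‖ ≤ c ^ k * ‖f‖ ^ 2 := by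
      intro k hk
      calc ‖b k‖ ≤ ‖f‖ * ‖(M ^ k) f‖ :=
        aux_cs inn_add_left inn_smul_left inn_conj_symm inn_nonneg hnorm f ((M ^ k) f)
      _ ≤ ‖f‖ * (‖M ^ k‖ * ‖f‖) :=
        mul_le_mul_of_nonneg_left (ContinuousLinearMap.le_opNorm _ _) (norm_nonneg f)
      _ ≤ ‖f‖ * (c ^ k * ‖f‖) := by
        have := norm_pow_le' M hk
        exact mul_le_mul_of_nonneg_left
          (mul_le_mul_of_nonneg_right this (norm_nonneg f)) (norm_nonneg f)
      _ = c ^ k * ‖f‖ ^ 2 := by ring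
    -- main dyadic induction
    have main : ∀ n : ℕ, b 1 ≤ ((1 - (2:ℝ)⁻¹ ^ n) * c) • b 0
        + ((2:ℝ)⁻¹ ^ n * c ^ ((1:ℤ) - 2 ^ n)) • b (2 ^ n) := by
      intro n
      induction n with
      | zero => simp
      | succ n ih =>
        have hck : (0:ℝ) < c ^ (-((2:ℤ) ^ n)) := zpow_pos hcpos _
        have hstep := aux_cross inn_add_left inn_smul_left inn_conj_symm inn_nonneg
          ((M ^ (2 ^ n)) f) f hck
        rw [hpow (2 ^ n) f f] at hstep
        rw [show inn ((M ^ 2 ^ n) f) ((M ^ 2 ^ n) f) = b (2 ^ (n+1)) by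
              rw [← hb_even (2 ^ n), ← pow_succ']] at hstep
        rw [show (c ^ (-((2:ℤ) ^ n)))⁻¹ = c ^ ((2:ℤ) ^ n) by
              rw [← zpow_neg, neg_neg]] at hstep
        rw [show inn f ((M ^ 2 ^ n) f) = b (2 ^ n) from rfl, ← hb0] at hstep
        have h4 := aux_smul_le_smul (by norm_num : (0:ℝ) ≤ 2⁻¹) hstep
        rw [show (2:ℝ)⁻¹ • (b (2 ^ n) + b (2 ^ n)) = b (2 ^ n) by
              rw [← two_smul ℝ (b (2 ^ n)), smul_smul]; norm_num] at h4
        rw [smul_add, smul_smul, smul_smul] at h4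
        have hKnn : (0:ℝ) ≤ (2:ℝ)⁻¹ ^ n * c ^ ((1:ℤ) - 2 ^ n) := by positivity
        have h6 := aux_smul_le_smul hKnn h4
        rw [smul_add, smul_smul, smul_smul] at h6
        have h7 := le_trans ih (add_le_add le_rfl h6)
        have hX : (2:ℝ)⁻¹ ^ n * c ^ ((1:ℤ) - 2 ^ n) * (2⁻¹ * c ^ (-((2:ℤ) ^ n)))
            = (2:ℝ)⁻¹ ^ (n+1) * c ^ ((1:ℤ) - 2 ^ (n+1)) := by
          have hz : c ^ ((1:ℤ) - 2 ^ n) * c ^ (-((2:ℤ) ^ n)) = c ^ ((1:ℤ) - 2 ^ (n+1)) := by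
            rw [← zpow_add₀ (ne_of_gt hcpos)]
            congr 1
            ring
          calc (2:ℝ)⁻¹ ^ n * c ^ ((1:ℤ) - 2 ^ n) * (2⁻¹ * c ^ (-((2:ℤ) ^ n)))
              = ((2:ℝ)⁻¹ ^ n * 2⁻¹) * (c ^ ((1:ℤ) - 2 ^ n) * c ^ (-((2:ℤ) ^ n))) := by ring
          _ = (2:ℝ)⁻¹ ^ (n+1) * c ^ ((1:ℤ) - 2 ^ (n+1)) := by rw [hz, ← pow_succ]
        have hY : (2:ℝ)⁻¹ ^ n * c ^ ((1:ℤ) - 2 ^ n) * (2⁻¹ * c ^ ((2:ℤ) ^ n))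
            = (2:ℝ)⁻¹ ^ (n+1) * c := by
          have hz2 : c ^ ((1:ℤ) - 2 ^ n) * c ^ ((2:ℤ) ^ n) = c := by
            rw [← zpow_add₀ (ne_of_gt hcpos)]
            norm_num [hc]
          calc (2:ℝ)⁻¹ ^ n * c ^ ((1:ℤ) - 2 ^ n) * (2⁻¹ * c ^ ((2:ℤ) ^ n))
              = ((2:ℝ)⁻¹ ^ n * 2⁻¹) * (c ^ ((1:ℤ) - 2 ^ n) * c ^ ((2:ℤ) ^ n)) := by ring
          _ = (2:ℝ)⁻¹ ^ (n+1) * c := by rw [hz2, ← pow_succ]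
        rw [hX, hY] at h7
        have hre : ((1 - (2:ℝ)⁻¹ ^ n) * c) • b 0
              + (((2:ℝ)⁻¹ ^ (n+1) * c ^ ((1:ℤ) - 2 ^ (n+1))) • b (2 ^ (n+1))
                + ((2:ℝ)⁻¹ ^ (n+1) * c) • b 0)
            = (((1 - (2:ℝ)⁻¹ ^ n) * c) + (2:ℝ)⁻¹ ^ (n+1) * c) • b 0
              + ((2:ℝ)⁻¹ ^ (n+1) * c ^ ((1:ℤ) - 2 ^ (n+1))) • b (2 ^ (n+1)) := by
          rw [add_smul]
          abel
        rw [hre] at h7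
        rw [show ((1 - (2:ℝ)⁻¹ ^ n) * c) + (2:ℝ)⁻¹ ^ (n+1) * c
              = (1 - (2:ℝ)⁻¹ ^ (n+1)) * c by ring] at h7
        exact h7
    have hone : (0:𝒜) ≤ 1 := by simpa using star_mul_self_nonneg (1:𝒜)
    have hb0nn : 0 ≤ b 0 := hb0 ▸ inn_nonneg f
    have hub : ∀ n : ℕ, b 1 ≤ c • b 0 + ((2:ℝ)⁻¹ ^ n * (c * ‖f‖ ^ 2)) • 1 := by
      intro n
      have hm := main (n+1)
      have hnn2 : 0 ≤ b (2 ^ (n+1)) := by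
        rw [show (2:ℕ) ^ (n+1) = 2 * 2 ^ n from pow_succ' 2 n]
        exact hbnn _
      have hcoef : (0:ℝ) ≤ (2:ℝ)⁻¹ ^ (n+1) * c ^ ((1:ℤ) - 2 ^ (n+1)) := by positivity
      have h1 := aux_smul_le_smul hcoef (aux_le_norm_one hnn2)
      rw [smul_smul] at h1
      have h2c : (2:ℝ)⁻¹ ^ (n+1) * c ^ ((1:ℤ) - 2 ^ (n+1)) * ‖b (2 ^ (n+1))‖
          ≤ (2:ℝ)⁻¹ ^ n * (c * ‖f‖ ^ 2) := by
        have hb' := hbnorm (2 ^ (n+1)) (by positivity)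
        have hz : c ^ ((1:ℤ) - 2 ^ (n+1)) * c ^ (((2:ℕ) ^ (n+1) : ℕ) : ℤ) = c := by
          rw [← zpow_add₀ (ne_of_gt hcpos)]
          rw [show (1:ℤ) - 2 ^ (n+1) + (((2:ℕ) ^ (n+1) : ℕ) : ℤ) = 1 by push_cast; ring,
            zpow_one]
        calc (2:ℝ)⁻¹ ^ (n+1) * c ^ ((1:ℤ) - 2 ^ (n+1)) * ‖b (2 ^ (n+1))‖
            ≤ (2:ℝ)⁻¹ ^ (n+1) * c ^ ((1:ℤ) - 2 ^ (n+1)) * (c ^ ((2:ℕ) ^ (n+1)) * ‖f‖ ^ 2) :=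
          mul_le_mul_of_nonneg_left hb' hcoef
        _ = (2:ℝ)⁻¹ ^ (n+1) * ((c ^ ((1:ℤ) - 2 ^ (n+1)) * c ^ (((2:ℕ) ^ (n+1) : ℕ) : ℤ)) * ‖f‖ ^ 2) := by
          rw [zpow_natCast]
          ring
        _ = (2:ℝ)⁻¹ ^ (n+1) * (c * ‖f‖ ^ 2) := by rw [hz]
        _ ≤ (2:ℝ)⁻¹ ^ n * (c * ‖f‖ ^ 2) := by
          apply mul_le_mul_of_nonneg_right _ (by positivity)
          exact pow_le_pow_of_le_one (by norm_num) (by norm_num) (Nat.le_succ n)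
      have hsecond : ((2:ℝ)⁻¹ ^ (n+1) * c ^ ((1:ℤ) - 2 ^ (n+1))) • b (2 ^ (n+1))
          ≤ ((2:ℝ)⁻¹ ^ n * (c * ‖f‖ ^ 2)) • 1 :=
        le_trans h1 (aux_smul_le_smul_right h2c hone)
      have hfirst : ((1 - (2:ℝ)⁻¹ ^ (n+1)) * c) • b 0 ≤ c • b 0 := by
        apply aux_smul_le_smul_right _ hb0nn
        nlinarith [pow_nonneg (by norm_num : (0:ℝ) ≤ 2⁻¹) (n+1), hcpos.le]
      exact le_trans hm (add_le_add hfirst hsecond)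
    have hfin := aux_le_of_forall_le_add (b 1) (c • b 0) (c * ‖f‖ ^ 2) hub
    rw [hb0] at hfin
    rw [show b 1 = inn f (M f) by rw [hb]; simp [pow_one]] at hfin
    exact hfin

end Key


end Aux

/-- If `T` is a bounded adjointable `𝒜`-linear operator, invertible with
bounded adjointable inverse, and `(X, Y)` is a continuous biframe with bounds `A, B`, then
`(T∘X, T∘Y)` is a continuous biframe with bounds `A·‖(T⁻¹)*‖⁻²` and `B·‖T*‖²`. -/
theorem continuous_biframe_map_invertible
    {𝒜 H Ω : Type*}
    -- `𝒜` is a unital C*-algebra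
    [NormedRing 𝒜] [StarRing 𝒜] [CStarRing 𝒜] [NormedAlgebra ℂ 𝒜] [CompleteSpace 𝒜]
    [PartialOrder 𝒜] [StarOrderedRing 𝒜]
    -- `H` is a Hilbert C*-module over `𝒜`
    [NormedAddCommGroup H] [NormedSpace ℝ H] [CompleteSpace H] [Module 𝒜 H]
    (inn : H → H → 𝒜)
    (inn_add_left : ∀ x y z : H, inn (x + y) z = inn x z + inn y z)
    (inn_smul_left : ∀ (a : 𝒜) (x z : H), inn (a • x) z = a * inn x z)
    (inn_conj_symm : ∀ x y : H, inn x y = star (inn y x))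
    (inn_nonneg : ∀ x : H, 0 ≤ inn x x)
    (inn_definite : ∀ x : H, inn x x = 0 → x = 0)
    (hnorm : ∀ x : H, ‖x‖ = Real.sqrt ‖inn x x‖)
    -- `(Ω, μ)` is a measure space
    [MeasurableSpace Ω] (μ : Measure Ω)
    -- `X, Y : Ω → H` are weakly measurable
    (X Y : Ω → H)
    (hXw : ∀ f : H, AEStronglyMeasurable (fun ω => inn f (X ω)) μ)
    (hYw : ∀ f : H, AEStronglyMeasurable (fun ω => inn f (Y ω)) μ)
    (A B : ℝ) (hA : 0 < A) (hAB : A ≤ B)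
    -- `(X, Y)` is a continuous biframe with bounds `A, B`
    (hframe : ∀ f : H,
      A • inn f f ≤ ∫ ω, inn f (X ω) * inn (Y ω) f ∂μ ∧
      ∫ ω, inn f (X ω) * inn (Y ω) f ∂μ ≤ B • inn f f)
    -- `T` is a bounded `𝒜`-linear operator with adjoint `Ts`
    (T Ts : H →L[ℝ] H)
    (hTmod : ∀ (a : 𝒜) (x : H), T (a • x) = a • T x)
    (hTadj : ∀ f g : H, inn (T f) g = inn f (Ts g))
    -- `T` is invertible with bounded inverse `Tinv`, whose adjoint is `Tinvs`
    (Tinv Tinvs : H →L[ℝ] H)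
    (hTinv₁ : ∀ x : H, Tinv (T x) = x) (hTinv₂ : ∀ x : H, T (Tinv x) = x)
    (hTinvadj : ∀ f g : H, inn (Tinv f) g = inn f (Tinvs g))
    -- all relevant integrands are Bochner integrable
    (hprod : ∀ f : H, Integrable (fun ω => inn f (X ω) * inn (Y ω) f) μ)
    (hprodT : ∀ f : H, Integrable (fun ω => inn f (T (X ω)) * inn (T (Y ω)) f) μ) :
    ∀ f : H,
      (A / ‖Tinvs‖ ^ 2) • inn f f ≤ ∫ ω, inn f (T (X ω)) * inn (T (Y ω)) f ∂μ ∧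
      ∫ ω, inn f (T (X ω)) * inn (T (Y ω)) f ∂μ ≤ (B * ‖Ts‖ ^ 2) • inn f f := by
  intro f
  -- adjoint symmetry facts
  have hTs : ∀ x y : H, inn (Ts x) y = inn x (T y) := by
    intro x y
    rw [inn_conj_symm, ← hTadj y x, ← inn_conj_symm]
  have hTinvs : ∀ x y : H, inn (Tinvs x) y = inn x (Tinv y) := by
    intro x y
    rw [inn_conj_symm, ← hTinvadj y x, ← inn_conj_symm]
  set g : H := Ts f with hg
  -- rewrite the integral
  have hInt : (∫ ω, inn f (T (X ω)) * inn (T (Y ω)) f ∂μ)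
      = ∫ ω, inn g (X ω) * inn (Y ω) g ∂μ := by
    congr 1
    funext ω
    have e1 : inn f (T (X ω)) = inn g (X ω) := by
      rw [inn_conj_symm, hTadj (X ω) f, ← inn_conj_symm]
    have e2 : inn (T (Y ω)) f = inn (Y ω) g := hTadj (Y ω) f
    rw [e1, e2]
  -- ‖T‖ ≤ ‖Ts‖ and ‖Tinv‖ ≤ ‖Tinvs‖
  have hle : ∀ (P Q : H →L[ℝ] H), (∀ a b : H, inn (P a) b = inn a (Q b)) → ‖P‖ ≤ ‖Q‖ := by
    intro P Q hPQ
    apply ContinuousLinearMap.opNorm_le_bound _ (norm_nonneg Q)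
    intro x
    have e : ‖P x‖ ^ 2 = ‖inn (P x) (P x)‖ := (aux_norm_inn_self hnorm _).symm
    rw [hPQ x (P x)] at e
    have h1 : ‖inn x (Q (P x))‖ ≤ ‖x‖ * ‖Q (P x)‖ :=
      aux_cs inn_add_left inn_smul_left inn_conj_symm inn_nonneg hnorm _ _
    have h2 : ‖Q (P x)‖ ≤ ‖Q‖ * ‖P x‖ := ContinuousLinearMap.le_opNorm _ _
    have key : ‖P x‖ * ‖P x‖ ≤ (‖Q‖ * ‖x‖) * ‖P x‖ := by nlinarith [norm_nonneg (P x), mul_le_mul_of_nonneg_left h2 (norm_nonneg x)]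
    rcases eq_or_lt_of_le (norm_nonneg (P x)) with h0 | hpos
    · rw [← h0]
      exact mul_nonneg (norm_nonneg Q) (norm_nonneg x)
    · exact le_of_mul_le_mul_right key hpos
  have hTle : ‖T‖ ≤ ‖Ts‖ := hle T Ts hTadj
  have hTinvle : ‖Tinv‖ ≤ ‖Tinvs‖ := hle Tinv Tinvs hTinvadj
  -- inn g g ≤ ‖Ts‖² • inn f f
  have hMsa : ∀ x y : H, inn ((T.comp Ts) x) y = inn x ((T.comp Ts) y) := by
    intro x y
    show inn (T (Ts x)) y = inn x (T (Ts y))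
    rw [hTadj (Ts x) y, hTs x (Ts y)]
  have hgg : inn g g ≤ (‖Ts‖ ^ 2) • inn f f := by
    have k1 := aux_key inn_add_left inn_smul_left inn_conj_symm inn_nonneg hnorm
      (T.comp Ts) hMsa f
    have e1 : inn f ((T.comp Ts) f) = inn g g := by
      show inn f (T (Ts f)) = inn g g
      rw [inn_conj_symm, hTadj (Ts f) f, ← hg, ← inn_conj_symm]
    rw [e1] at k1
    refine le_trans k1 (aux_smul_le_smul_right ?_ (inn_nonneg f))
    calc ‖T.comp Ts‖ ≤ ‖T‖ * ‖Ts‖ := ContinuousLinearMap.opNorm_comp_le _ _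
    _ ≤ ‖Ts‖ * ‖Ts‖ := mul_le_mul_of_nonneg_right hTle (norm_nonneg Ts)
    _ = ‖Ts‖ ^ 2 := (sq ‖Ts‖).symm
  -- Tinvs ∘ Ts = id
  have hTsinv : ∀ x : H, Tinvs (Ts x) = x := by
    intro x
    have hxx : ∀ z : H, inn z (Tinvs (Ts x)) = inn z x := by
      intro z
      rw [← hTinvadj z (Ts x), ← hTadj (Tinv z) x, hTinv₂ z]
    have hd : inn (Tinvs (Ts x) - x) (Tinvs (Ts x) - x) = 0 := by
      rw [aux_inn_sub_right inn_add_left inn_smul_left inn_conj_symm, hxx, sub_self]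
    exact sub_eq_zero.mp (inn_definite _ hd)
  -- inn f f ≤ ‖Tinvs‖² • inn g g
  have hMinvsa : ∀ x y : H, inn ((Tinv.comp Tinvs) x) y = inn x ((Tinv.comp Tinvs) y) := by
    intro x y
    show inn (Tinv (Tinvs x)) y = inn x (Tinv (Tinvs y))
    rw [hTinvadj (Tinvs x) y, hTinvs x (Tinvs y)]
  have hff : inn f f ≤ (‖Tinvs‖ ^ 2) • inn g g := by
    have k2 := aux_key inn_add_left inn_smul_left inn_conj_symm inn_nonneg hnorm
      (Tinv.comp Tinvs) hMinvsa g
    have e1 : inn g ((Tinv.comp Tinvs) g) = inn f f := by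
      show inn g (Tinv (Tinvs g)) = inn f f
      rw [inn_conj_symm, hTinvadj (Tinvs g) g, hg, hTsinv f, ← inn_conj_symm]
    rw [e1] at k2
    refine le_trans k2 (aux_smul_le_smul_right ?_ (inn_nonneg g))
    calc ‖Tinv.comp Tinvs‖ ≤ ‖Tinv‖ * ‖Tinvs‖ := ContinuousLinearMap.opNorm_comp_le _ _
    _ ≤ ‖Tinvs‖ * ‖Tinvs‖ := mul_le_mul_of_nonneg_right hTinvle (norm_nonneg Tinvs)
    _ = ‖Tinvs‖ ^ 2 := (sq ‖Tinvs‖).symm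
  have hframeg := hframe g
  by_cases hTz : ‖Tinvs‖ = 0
  · -- degenerate : H ≅ 0 on the range, f = 0
    have hT0 : Tinvs = 0 := norm_eq_zero.mp hTz
    have hf0 : f = 0 := by
      rw [← hTsinv f, hT0]
      rfl
    have hint0 : (∫ ω, inn f (T (X ω)) * inn (T (Y ω)) f ∂μ) = 0 := by
      have : (fun ω => inn f (T (X ω)) * inn (T (Y ω)) f) = fun _ => (0:𝒜) := by
        funext ω
        rw [hf0, aux_inn_zero_left inn_add_left, zero_mul]
      rw [this, integral_zero]
    rw [hint0, hf0, aux_inn_zero_left inn_add_left, smul_zero, smul_zero]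
    exact ⟨le_refl 0, le_refl 0⟩
  · have hTvpos : 0 < ‖Tinvs‖ := lt_of_le_of_ne (norm_nonneg Tinvs) (Ne.symm hTz)
    constructor
    · -- lower bound
      rw [hInt]
      calc (A / ‖Tinvs‖ ^ 2) • inn f f
          ≤ (A / ‖Tinvs‖ ^ 2) • ((‖Tinvs‖ ^ 2) • inn g g) :=
        aux_smul_le_smul (by positivity) hff
      _ = A • inn g g := by
          rw [smul_smul, div_mul_cancel₀ A (by positivity : (‖Tinvs‖:ℝ) ^ 2 ≠ 0)]
      _ ≤ ∫ ω, inn g (X ω) * inn (Y ω) g ∂μ := hframeg.1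
    · -- upper bound
      rw [hInt]
      calc (∫ ω, inn g (X ω) * inn (Y ω) g ∂μ) ≤ B • inn g g := hframeg.2
      _ ≤ B • ((‖Ts‖ ^ 2) • inn f f) := aux_smul_le_smul (le_trans hA.le hAB) hgg
      _ = (B * ‖Ts‖ ^ 2) • inn f f := by rw [smul_smul]
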